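/- (Chain rule for BHPC p-values.) Let P₁,…,Pₙ be independent valid p-values and let g be a symmetric, nondecreasing function on [0,1]^{n−r+1} such that g(P_{(s)},…,P_{(n−r+1)} larger order statistics) is a valid p-value for the partial conjunction null H₀^{s/(n−r+1)} of its n−r+1 inputs. Then P_{r/n} = g(P_{(r)},…,P_{(n)}) is a valid p-value for H₀^{(r+s−1)/n}: for every θ with at most r+s−2 non-null components among the n, Pr_θ(P_{r/n} ≤ α) ≤ α for all α. -/

import Mathlib

open MeasureTheory ProbabilityTheory
open scoped Classical

lemma iIndepFun_comp_inj {Ω : Type*} [MeasurableSpace Ω] {μ : Measure Ω}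
    {nn mm : ℕ} {P : Fin nn → Ω → ℝ}
    (h : iIndepFun P μ)
    (e : Fin mm → Fin nn) (he : Function.Injective e) :
    iIndepFun (fun j => P (e j)) μ := by
  rw [iIndepFun_iff_measure_inter_preimage_eq_mul] at h ⊢
  intro S sets hsets
  rcases isEmpty_or_nonempty (Fin mm) with hE | hNE
  · have hS : S = ∅ := Finset.eq_empty_of_isEmpty S
    have h0 := h (∅ : Finset (Fin nn)) (sets := fun _ => Set.univ) (by simp)
    rw [show (⋂ i ∈ (∅ : Finset (Fin nn)), P i ⁻¹' Set.univ) = Set.univ by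
      simp, Finset.prod_empty] at h0
    simp [hS, h0]
  · set sets' : Fin nn → Set ℝ := fun i => sets (Function.invFun e i) with hsets'
    have hinv : ∀ j : Fin mm, sets' (e j) = sets j := by
      intro j
      simp [hsets', Function.leftInverse_invFun he j]
    have hmeas' : ∀ i, i ∈ S.image e → MeasurableSet (sets' i) := by
      intro i hi
      simp only [Finset.mem_image] at hi
      obtain ⟨j, hj, rfl⟩ := hi
      rw [hinv]; exact hsets j hj
    have key := h (S.image e) hmeas'
    have h1 : (⋂ i ∈ S.image e, P i ⁻¹' sets' i) = ⋂ j ∈ S, (fun ω => P (e j) ω) ⁻¹' sets j := by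
      ext ω
      simp only [Set.mem_iInter, Finset.mem_image]
      constructor
      · intro h' j hj
        have := h' (e j) ⟨j, hj, rfl⟩
        rwa [hinv] at this
      · rintro h' i ⟨j, hj, rfl⟩
        rw [hinv]; exact h' j hj
    have h2 : (∏ i ∈ S.image e, μ (P i ⁻¹' sets' i)) = ∏ j ∈ S, μ ((fun ω => P (e j) ω) ⁻¹' sets j) := by
      rw [Finset.prod_image (fun a _ b _ hab => he hab)]
      exact Finset.prod_congr rfl (fun j _ => by rw [hinv])
    rw [← h1, ← h2]
    exact key

lemma key_order_stat {nn mm : ℕ} (f : Fin nn → ℝ) (e : Fin mm → Fin nn)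
    (he : Function.Injective e) (j : Fin mm) (t : Fin nn)
    (ht : (t : ℕ) = nn - mm + j) :
    (f ∘ e) (Tuple.sort (f ∘ e) j) ≤ f (Tuple.sort f t) := by
  have hmn : mm ≤ nn := by
    have := Fintype.card_le_of_injective e he
    simpa using this
  by_contra hcon
  push_neg at hcon
  set v := f (Tuple.sort f t) with hv
  set σ := Tuple.sort f with hσ
  set τ := Tuple.sort (f ∘ e) with hτ
  set A : Finset (Fin nn) := (Finset.Iic t).image σ with hA
  set B : Finset (Fin nn) := (Finset.Ici j).image (fun k => e (τ k)) with hB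
  have hAv : ∀ i ∈ A, f i ≤ v := by
    intro i hi
    simp only [hA, Finset.mem_image, Finset.mem_Iic] at hi
    obtain ⟨k, hk, rfl⟩ := hi
    exact Tuple.monotone_sort f hk
  have hBv : ∀ i ∈ B, v < f i := by
    intro i hi
    simp only [hB, Finset.mem_image, Finset.mem_Ici] at hi
    obtain ⟨k, hk, rfl⟩ := hi
    calc v < (f ∘ e) (τ j) := hcon
    _ ≤ (f ∘ e) (τ k) := Tuple.monotone_sort (f ∘ e) hk
  have hdisj : Disjoint A B := by
    rw [Finset.disjoint_left]
    intro i hiA hiB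
    exact absurd (hAv i hiA) (not_le.mpr (hBv i hiB))
  have hcardA : A.card = (t : ℕ) + 1 := by
    rw [hA, Finset.card_image_of_injective _ (Tuple.sort f).injective, Fin.card_Iic]
  have hcardB : B.card = mm - (j : ℕ) := by
    rw [hB, Finset.card_image_of_injective _
      (fun a b hab => (Tuple.sort (f ∘ e)).injective (he hab)), Fin.card_Ici]
  have := Finset.card_le_univ (A ∪ B)
  rw [Finset.card_union_of_disjoint hdisj, hcardA, hcardB] at this
  simp only [Finset.card_univ, Fintype.card_fin] at this
  have hj := j.isLt
  omega

theorem bhpc_chain_rule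
    {Ω Θ' : Type*} [MeasurableSpace Ω] (n r s : ℕ)
    (hr1 : 1 ≤ r) (hrn : r ≤ n) (hs1 : 1 ≤ s) (hs : s ≤ n - r + 1)
    (Pr : (Fin n → Θ') → Measure Ω) (hprob : ∀ θ, IsProbabilityMeasure (Pr θ))
    (Θ0 : Fin n → Set Θ') (P : Fin n → Ω → ℝ)
    (hPmeas : ∀ i, Measurable (P i))
    (hPrange : ∀ i ω, P i ω ∈ Set.Icc (0:ℝ) 1)
    (hindep : ∀ θ, iIndepFun P (Pr θ))
    (hvalid : ∀ θ : Fin n → Θ', ∀ i, θ i ∈ Θ0 i →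
      ∀ α ∈ Set.Icc (0:ℝ) 1, Pr θ {ω | P i ω ≤ α} ≤ ENNReal.ofReal α)
    (g : (Fin (n - r + 1) → ℝ) → ℝ)
    (hg_mono : Monotone g)
    (hg_sym : ∀ (σ : Equiv.Perm (Fin (n - r + 1))) (q : Fin (n - r + 1) → ℝ),
      g (q ∘ σ) = g q)
    (hg_pc_valid : ∀ (ν : Measure Ω), IsProbabilityMeasure ν →
      ∀ Q : Fin (n - r + 1) → Ω → ℝ, (∀ i, Measurable (Q i)) →
        iIndepFun Q ν →
        (∀ i ω, Q i ω ∈ Set.Icc (0:ℝ) 1) →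
        ∀ T : Finset (Fin (n - r + 1)), (n - r + 1) - (s - 1) ≤ T.card →
          (∀ i ∈ T, ∀ α ∈ Set.Icc (0:ℝ) 1,
            ν {ω | Q i ω ≤ α} ≤ ENNReal.ofReal α) →
          ∀ α ∈ Set.Icc (0:ℝ) 1,
            ν {ω | g (fun i => Q i ω) ≤ α} ≤ ENNReal.ofReal α) :
    ∀ θ : Fin n → Θ',
      (Finset.univ.filter (fun i => θ i ∉ Θ0 i)).card ≤ r + s - 2 →
      ∀ α ∈ Set.Icc (0:ℝ) 1,
        Pr θ {ω | g (fun j => (fun i => P i ω)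
          (Tuple.sort (fun i => P i ω) ⟨r - 1 + j.1, by have := j.isLt; omega⟩)) ≤ α}
          ≤ ENNReal.ofReal α := by
  intro θ hθ α hα
  -- the finset of "null" (good) indices
  set G : Finset (Fin n) := Finset.univ.filter (fun i => θ i ∈ Θ0 i) with hG
  have hGcard : G.card + (Finset.univ.filter (fun i => θ i ∉ Θ0 i)).card = n := by
    rw [hG, Finset.card_filter_add_card_filter_not, Finset.card_univ,
      Fintype.card_fin]
  obtain ⟨G', hG'sub, hG'card⟩ :=
    Finset.exists_subset_card_eq (s := G) (n := min (n - r + 1) G.card) (min_le_right _ _)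
  obtain ⟨S, hG'S, -, hScard⟩ :=
    Finset.exists_subsuperset_card_eq (G'.subset_univ) (n := n - r + 1)
      (by rw [hG'card]; exact min_le_left _ _)
      (by rw [Finset.card_univ, Fintype.card_fin]; omega)
  set e : Fin (n - r + 1) → Fin n := fun j => S.orderEmbOfFin hScard j with he
  have heInj : Function.Injective e := fun a b hab => (S.orderEmbOfFin hScard).injective hab
  have heMem : ∀ j, e j ∈ S := fun j => S.orderEmbOfFin_mem hScard j
  have heSurj : ∀ x ∈ S, ∃ j, e j = x := by
    intro x hx
    have hrange := Finset.range_orderEmbOfFin S hScard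
    have : x ∈ Set.range (S.orderEmbOfFin hScard) := by rw [hrange]; exact hx
    obtain ⟨j, hj⟩ := this
    exact ⟨j, hj⟩
  set Q : Fin (n - r + 1) → Ω → ℝ := fun j ω => P (e j) ω with hQ
  have hQmeas : ∀ j, Measurable (Q j) := fun j => hPmeas (e j)
  have hQindep : iIndepFun Q (Pr θ) :=
    iIndepFun_comp_inj (hindep θ) e heInj
  have hQrange : ∀ j ω, Q j ω ∈ Set.Icc (0:ℝ) 1 := fun j ω => hPrange (e j) ω
  set T : Finset (Fin (n - r + 1)) :=
    Finset.univ.filter (fun j => θ (e j) ∈ Θ0 (e j)) with hT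
  have hTcard : (n - r + 1) - (s - 1) ≤ T.card := by
    have h1 : G' ⊆ T.image e := by
      intro x hx
      obtain ⟨j, rfl⟩ := heSurj x (hG'S hx)
      refine Finset.mem_image.mpr ⟨j, ?_, rfl⟩
      rw [hT, Finset.mem_filter]
      exact ⟨Finset.mem_univ j, (Finset.mem_filter.mp (hG'sub hx)).2⟩
    have h2 := Finset.card_le_card h1
    rw [Finset.card_image_of_injective _ heInj] at h2
    omega
  have hTvalid : ∀ j ∈ T, ∀ β ∈ Set.Icc (0:ℝ) 1,
      Pr θ {ω | Q j ω ≤ β} ≤ ENNReal.ofReal β := by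
    intro j hj
    exact hvalid θ (e j) (Finset.mem_filter.mp hj).2
  have main := hg_pc_valid (Pr θ) (hprob θ) Q hQmeas hQindep hQrange T hTcard hTvalid α hα
  refine le_trans (measure_mono ?_) main
  intro ω hω
  simp only [Set.mem_setOf_eq] at hω ⊢
  set f : Fin n → ℝ := fun i => P i ω with hf
  have hQf : (fun j => Q j ω) = f ∘ e := rfl
  set τ : Equiv.Perm (Fin (n - r + 1)) := Tuple.sort (f ∘ e) with hτ
  have hsym := hg_sym τ (fun j => Q j ω)
  have hle : ((fun j => Q j ω) ∘ τ) ≤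
      (fun j : Fin (n - r + 1) => f
        (Tuple.sort f ⟨r - 1 + j.1, by have := j.isLt; omega⟩)) := by
    intro j
    have := key_order_stat f e heInj j ⟨r - 1 + j.1, by have := j.isLt; omega⟩
      (by simp only []; have := j.isLt; omega)
    exact this
  calc g (fun j => Q j ω) = g ((fun j => Q j ω) ∘ τ) := hsym.symm
    _ ≤ g (fun j : Fin (n - r + 1) => f
        (Tuple.sort f ⟨r - 1 + j.1, by have := j.isLt; omega⟩)) := hg_mono hle
    _ ≤ α := hω
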